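/- Let s ≥ 2 and work over P = ℤ[T_1,…,T_s,B_1,…,B_s]. Let 𝒜 be an s-element set of rows of the matrix consisting of the rows of N_s(T_1,…,T_s) together with the row (B_1,…,B_s), let N_𝒜 be the s×s matrix formed by the rows in 𝒜, and let G_𝒜 be the simple graph on {1,…,s} whose edges are the pairs (l,l') indexing rows in 𝒜. If G_𝒜 is a tree, then det(N_𝒜) = ± (Σ_{l=1}^s B_l T_l) · T_1^{deg(1)−1}⋯T_s^{deg(s)−1}, where deg(l) is the degree of the vertex l in G_𝒜; i.e., for any ordering of the rows there is a sign ε ∈ {1,−1} with det(N_𝒜) = ε·(Σ_{l=1}^s B_l T_l)·∏_{l=1}^s T_l^{deg(l)−1}. -/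

import Mathlib

section AuxTreeDet
open SimpleGraph Finset

lemma aux_degree_pos {V : Type*} [Fintype V] {G : SimpleGraph V} [DecidableRel G.Adj]
    (hc : G.Connected) (h2 : 2 ≤ Fintype.card V) (v : V) : 0 < G.degree v := by
  obtain ⟨w, hw⟩ := Fintype.exists_ne_of_one_lt_card h2 v
  obtain ⟨p⟩ := hc.preconnected v w
  rw [G.degree_pos_iff_exists_adj]
  cases p with
  | nil => exact absurd rfl hw
  | cons h q => exact ⟨_, h⟩

lemma aux_exists_leaf {V : Type*} [Fintype V] {G : SimpleGraph V} [DecidableRel G.Adj]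
    (hG : G.IsTree) (h2 : 2 ≤ Fintype.card V) :
    ∃ v u, G.Adj u v ∧ ∀ d, G.Adj v d → d = u := by
  have hsum := G.sum_degrees_eq_twice_card_edges
  have hcard := hG.card_edgeFinset
  have hlow : ∃ v : V, G.degree v < 2 := by
    by_contra h
    push_neg at h
    have : 2 * Fintype.card V ≤ ∑ v : V, G.degree v := by
      calc 2 * Fintype.card V = ∑ _v : V, 2 := by
            simp [Finset.sum_const, Finset.card_univ, mul_comm]
        _ ≤ ∑ v : V, G.degree v := Finset.sum_le_sum fun v _ => h v
    omega
  obtain ⟨v, hv⟩ := hlow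
  have hdv : G.degree v = 1 :=
    le_antisymm (by omega) (aux_degree_pos hG.isConnected h2 v)
  obtain ⟨u, hu⟩ := Finset.card_eq_one.mp hdv
  refine ⟨v, u, ?_, ?_⟩
  · have : u ∈ G.neighborFinset v := by rw [hu]; simp
    exact ((G.mem_neighborFinset v u).mp this).symm
  · intro d hd
    have : d ∈ G.neighborFinset v := (G.mem_neighborFinset v d).mpr hd
    rw [hu] at this
    simpa using this


lemma aux_comap_isTree {n : ℕ} {G : SimpleGraph (Fin (n + 2))} (hG : G.IsTree)
    {v u : Fin (n + 2)} (hleaf : ∀ d, G.Adj v d → d = u) :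
    (G.comap v.succAbove).IsTree := by
  have hf : Function.Injective v.succAbove := Fin.succAbove_right_injective
  constructor
  · constructor
    intro x y
    obtain ⟨p⟩ := hG.isConnected.preconnected (v.succAbove x) (v.succAbove y)
    have key : ∀ (k : ℕ) (s t : Fin (n + 2)) (p : G.Walk s t), p.length ≤ k →
        ∀ x y : Fin (n + 1), s = v.succAbove x → t = v.succAbove y →
        (G.comap v.succAbove).Reachable x y := by
      intro k
      induction k with
      | zero =>
        intro s t p hp x y hs ht
        cases p with
        | nil =>
          have : x = y := hf (hs.symm.trans ht)
          exact this ▸ Reachable.refl x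
        | cons h q => simp at hp
      | succ k ih =>
        intro s t p hp x y hs ht
        cases p with
        | nil =>
          have : x = y := hf (hs.symm.trans ht)
          exact this ▸ Reachable.refl x
        | @cons _ c _ h q =>
          simp only [SimpleGraph.Walk.length_cons] at hp
          by_cases hc : c = v
          · have hxu : s = u := by
              refine hleaf _ ?_
              rw [← hc]; exact h.symm
            cases q with
            | nil =>
              exact absurd (hc.symm.trans ht) (Fin.succAbove_ne v y).symm
            | @cons _ d _ h2 q2 =>
              have hd : d = u := hleaf _ (by rw [← hc]; exact h2)
              simp only [SimpleGraph.Walk.length_cons] at hp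
              exact ih _ _ q2 (by omega) x y (hd.trans (hxu.symm.trans hs)) ht
          · obtain ⟨c', hc'⟩ := Fin.exists_succAbove_eq hc
            have hadj' : (G.comap v.succAbove).Adj x c' := by
              show G.Adj (v.succAbove x) (v.succAbove c')
              rw [hc', ← hs]; exact h
            exact hadj'.reachable.trans (ih _ _ q (by omega) c' y hc'.symm ht)
    exact key p.length _ _ p le_rfl x y rfl rfl
  · intro x c hc
    exact hG.IsAcyclic (c.map ⟨v.succAbove, fun h => h⟩) (hc.map (fun _ _ hab => hf hab))


lemma aux_key_det {R : Type*} [CommRing R] :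
    ∀ (n : ℕ) (w : Fin (n + 1) → R) (a b : Fin n → Fin (n + 1))
      (G : SimpleGraph (Fin (n + 1))), G.IsTree →
      (∀ i, G.Adj (a i) (b i)) →
      (∀ i j, s(a i, b i) = s(a j, b j) → i = j) →
      (∀ x y, G.Adj x y → ∃ i, s(a i, b i) = s(x, y)) →
      ∀ M : Matrix (Fin (n + 1)) (Fin (n + 1)) R,
      (∀ c, M 0 c = w c) →
      (∀ i c, M i.succ c = if c = b i then 1 else if c = a i then -1 else 0) →
      ∃ ε : ℤ, IsUnit ε ∧ M.det = (ε : R) * ∑ c, w c := by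
  intro n
  induction n with
  | zero =>
    intro w a b G hG hadj hinj hsurj M hM0 hMe
    refine ⟨1, isUnit_one, ?_⟩
    rw [Matrix.det_fin_one, hM0]
    simp
  | succ n ih =>
    intro w a b G hG hadj hinj hsurj M hM0 hMe
    classical
    obtain ⟨v, u, huv, hleaf⟩ := aux_exists_leaf hG (by simp)
    obtain ⟨iv, hiv⟩ := hsurj u v huv
    have hne_uv : u ≠ v := huv.ne
    have hab_ne : ∀ i, a i ≠ b i := fun i => (hadj i).ne
    have hor : (a iv = u ∧ b iv = v) ∨ (a iv = v ∧ b iv = u) := Sym2.eq_iff.mp hiv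
    -- edges other than iv avoid v
    have hav : ∀ i, i ≠ iv → a i ≠ v ∧ b i ≠ v := by
      intro i hi
      constructor
      · intro h
        apply hi
        apply hinj
        rw [hiv]
        have hb : b i = u := hleaf _ (h ▸ hadj i)
        rw [h, hb, Sym2.eq_swap]
      · intro h
        apply hi
        apply hinj
        rw [hiv]
        have ha : a i = u := hleaf _ (h ▸ (hadj i).symm)
        rw [h, ha]
    have hMv0 : ∀ i, i ≠ iv → M i.succ v = 0 := by
      intro i hi
      rw [hMe]
      rw [if_neg (Ne.symm (hav i hi).2), if_neg (Ne.symm (hav i hi).1)]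
    set M₁ := M.updateCol u (fun i => M i u + M i v) with hM₁def
    have hdet1 : M₁.det = M.det := Matrix.det_updateCol_add_self M hne_uv
    -- the leaf row of M₁
    have hM₁leaf : ∀ c, M₁ iv.succ c = if c = v then M iv.succ v else 0 := by
      intro c
      by_cases hcv : c = v
      · subst hcv
        rw [if_pos rfl, hM₁def, Matrix.updateCol_ne hne_uv.symm]
      · rw [if_neg hcv]
        by_cases hcu : c = u
        · subst hcu
          rw [hM₁def, Matrix.updateCol_self, hMe, hMe]
          rcases hor with ⟨h1, h2⟩ | ⟨h1, h2⟩ <;> subst h1 <;> subst h2 <;>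
            simp [hab_ne iv, (hab_ne iv).symm]
        · rw [hM₁def, Matrix.updateCol_ne hcu, hMe]
          rcases hor with ⟨h1, h2⟩ | ⟨h1, h2⟩ <;> subst h1 <;> subst h2 <;>
            simp [hcv, hcu]
    -- Laplace expansion along the leaf row
    set M₂ := M₁.submatrix (iv.succ).succAbove v.succAbove with hM₂def
    have hexp : M₁.det = (-1) ^ ((iv.succ : ℕ) + (v : ℕ)) * M iv.succ v * M₂.det := by
      rw [Matrix.det_succ_row M₁ iv.succ, Finset.sum_eq_single v]
      · rw [hM₁leaf, if_pos rfl]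
      · intro j _ hj
        rw [hM₁leaf, if_neg hj]
        ring
      · intro h
        exact absurd (Finset.mem_univ v) h
    -- data for the induction hypothesis
    have hej_ne : ∀ j : Fin n, iv.succAbove j ≠ iv := Fin.succAbove_ne iv
    have haex : ∀ j : Fin n, ∃ z, v.succAbove z = a (iv.succAbove j) :=
      fun j => Fin.exists_succAbove_eq (hav _ (hej_ne j)).1
    have hbex : ∀ j : Fin n, ∃ z, v.succAbove z = b (iv.succAbove j) :=
      fun j => Fin.exists_succAbove_eq (hav _ (hej_ne j)).2
    choose a' ha' using haex
    choose b' hb' using hbex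
    have hfinj : Function.Injective v.succAbove := Fin.succAbove_right_injective
    set G' := G.comap v.succAbove with hG'def
    have hG' : G'.IsTree := aux_comap_isTree hG hleaf
    have hadj' : ∀ j, G'.Adj (a' j) (b' j) := by
      intro j
      show G.Adj (v.succAbove (a' j)) (v.succAbove (b' j))
      rw [ha', hb']
      exact hadj _
    have hinj' : ∀ i j, s(a' i, b' i) = s(a' j, b' j) → i = j := by
      intro i j h
      have h2 := congrArg (Sym2.map v.succAbove) h
      rw [Sym2.map_pair_eq, Sym2.map_pair_eq, ha', hb', ha', hb'] at h2
      exact Fin.succAbove_right_injective (hinj _ _ h2)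
    have hsurj' : ∀ x y, G'.Adj x y → ∃ j, s(a' j, b' j) = s(x, y) := by
      intro x y hxy
      obtain ⟨i, hi⟩ := hsurj _ _ hxy
      have hi_ne : i ≠ iv := by
        intro h
        rw [h, hiv] at hi
        rcases Sym2.eq_iff.mp hi with ⟨h1, h2⟩ | ⟨h1, h2⟩
        · exact Fin.succAbove_ne v y h2.symm
        · exact Fin.succAbove_ne v x h2.symm
      obtain ⟨j, hj⟩ := Fin.exists_succAbove_eq hi_ne
      refine ⟨j, Sym2.map.injective hfinj ?_⟩
      rw [Sym2.map_pair_eq, Sym2.map_pair_eq, ha', hb', hj, hi]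
    have h00 : (iv.succ).succAbove 0 = 0 := by
      rw [Fin.succAbove_of_castSucc_lt] <;> simp [Fin.succ_pos]
    set w' : Fin (n + 1) → R := fun c => M₁ 0 (v.succAbove c) with hw'def
    have hM₂0 : ∀ c, M₂ 0 c = w' c := by
      intro c
      show M₁ ((iv.succ).succAbove 0) (v.succAbove c) = _
      rw [h00]
    have hM₂e : ∀ j c, M₂ j.succ c = if c = b' j then 1 else if c = a' j then -1 else 0 := by
      intro j c
      show M₁ ((iv.succ).succAbove j.succ) (v.succAbove c) = _
      rw [Fin.succ_succAbove_succ]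
      have hrow : M₁ (iv.succAbove j).succ (v.succAbove c)
          = M (iv.succAbove j).succ (v.succAbove c) := by
        by_cases hxu : v.succAbove c = u
        · rw [hM₁def, hxu, Matrix.updateCol_self, hMv0 _ (hej_ne j), add_zero]
        · rw [hM₁def, Matrix.updateCol_ne hxu]
      rw [hrow, hMe, ← ha' j, ← hb' j]
      simp [hfinj.eq_iff]
    obtain ⟨ε', hε', hdet₂⟩ := ih w' a' b' G' hG' hadj' hinj' hsurj' M₂ hM₂0 hM₂e
    have hsum : ∑ c, w' c = ∑ x, w x := by
      show ∑ c, M₁ 0 (v.succAbove c) = ∑ x, w x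
      have hg : ∀ x, M₁ 0 x = w x + (if x = u then w v else 0) := by
        intro x
        by_cases hxu : x = u
        · subst hxu
          rw [hM₁def, Matrix.updateCol_self, hM0, hM0, if_pos rfl]
        · rw [hM₁def, Matrix.updateCol_ne hxu, hM0, if_neg hxu, add_zero]
      have hsplit := Fin.sum_univ_succAbove (fun x => M₁ 0 x) v
      have h1 : ∑ x, M₁ 0 x = (∑ x, w x) + w v := by
        simp only [hg]
        rw [Finset.sum_add_distrib, Finset.sum_ite_eq' Finset.univ u (fun _ => w v)]
        simp
      have h2 : M₁ 0 v = w v := by rw [hg, if_neg (Ne.symm hne_uv), add_zero]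
      rw [h1, h2] at hsplit
      linear_combination -hsplit
    have hδ : M iv.succ v = (1 : R) ∨ M iv.succ v = (-1 : R) := by
      rw [hMe]
      rcases hor with ⟨h1, h2⟩ | ⟨h1, h2⟩
      · left; rw [if_pos h2.symm]
      · right
        rw [if_neg (by rw [h2]; exact Ne.symm hne_uv), if_pos h1.symm]
    obtain ⟨δ, hδu, hδc⟩ : ∃ δ : ℤ, IsUnit δ ∧ M iv.succ v = (δ : R) := by
      rcases hδ with h | h
      · exact ⟨1, isUnit_one, by rw [h]; simp⟩
      · exact ⟨-1, isUnit_one.neg, by rw [h]; simp⟩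
    refine ⟨(-1) ^ ((iv.succ : ℕ) + (v : ℕ)) * δ * ε', ?_, ?_⟩
    · exact ((isUnit_one.neg.pow _).mul hδu).mul hε'
    · rw [← hdet1, hexp, hδc, hdet₂, hsum]
      push_cast
      ring

lemma aux_main (n : ℕ) (hs : 2 ≤ n + 1)
    (H : Matrix ({p : Fin (n + 1) × Fin (n + 1) // p.1 < p.2} ⊕ Unit) (Fin (n + 1))
      (MvPolynomial (Fin (n + 1) ⊕ Fin (n + 1)) ℤ))
    (hHinl : ∀ qq c, H (Sum.inl qq) c =
      if c = qq.1.1 then -(MvPolynomial.X (Sum.inl qq.1.2)) else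
        if c = qq.1.2 then MvPolynomial.X (Sum.inl qq.1.1) else 0)
    (hHinr : ∀ u c, H (Sum.inr u) c = MvPolynomial.X (Sum.inr c))
    (r : Fin (n + 1) → {p : Fin (n + 1) × Fin (n + 1) // p.1 < p.2} ⊕ Unit)
    (hr : Function.Injective r)
    (G : SimpleGraph (Fin (n + 1)))
    (hGdef : G = (SimpleGraph.fromRel fun l l' : Fin (n + 1) =>
          ∃ (i : Fin (n + 1)) (h : l < l'), r i = Sum.inl ⟨(l, l'), h⟩))
    (htree : G.IsTree) :
    ∃ ε : ℤ, (ε = 1 ∨ ε = -1) ∧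
      (H.submatrix r id).det =
        (ε : MvPolynomial (Fin (n + 1) ⊕ Fin (n + 1)) ℤ) *
          ((∑ l, (MvPolynomial.X (Sum.inr l) : MvPolynomial (Fin (n + 1) ⊕ Fin (n + 1)) ℤ) *
              MvPolynomial.X (Sum.inl l)) *
            ∏ l, (MvPolynomial.X (Sum.inl l) : MvPolynomial (Fin (n + 1) ⊕ Fin (n + 1)) ℤ) ^
              ((G.neighborSet l).ncard - 1)) := by
  classical
  set T : Fin (n + 1) → MvPolynomial (Fin (n + 1) ⊕ Fin (n + 1)) ℤ :=
    fun l => MvPolynomial.X (Sum.inl l) with hTdef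
  set B : Fin (n + 1) → MvPolynomial (Fin (n + 1) ⊕ Fin (n + 1)) ℤ :=
    fun l => MvPolynomial.X (Sum.inr l) with hBdef
  -- the extra row is hit
  have hinr : ∃ i₀, r i₀ = Sum.inr () := by
    by_contra hcon
    push_neg at hcon
    have hq0 : ∀ i, ∃ qq : {p : Fin (n + 1) × Fin (n + 1) // p.1 < p.2}, r i = Sum.inl qq := by
      intro i
      cases hri : r i with
      | inl qq => exact ⟨qq, rfl⟩
      | inr uu => cases uu; exact absurd hri (hcon i)
    choose q0 hq0 using hq0
    have hcard := htree.card_edgeFinset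
    have hmem : ∀ i, s((q0 i).1.1, (q0 i).1.2) ∈ G.edgeFinset := by
      intro i
      rw [SimpleGraph.mem_edgeFinset, SimpleGraph.mem_edgeSet, hGdef,
        SimpleGraph.fromRel_adj]
      exact ⟨ne_of_lt (q0 i).2, Or.inl ⟨i, (q0 i).2, by rw [hq0 i]⟩⟩
    have hle : Fintype.card (Fin (n + 1)) ≤ G.edgeFinset.card := by
      rw [← Finset.card_univ]
      apply Finset.card_le_card_of_injOn (fun i => s((q0 i).1.1, (q0 i).1.2))
        (fun i _ => hmem i)
      intro i _ j _ hij
      rcases Sym2.eq_iff.mp hij with ⟨h1, h2⟩ | ⟨h1, h2⟩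
      · apply hr
        rw [hq0 i, hq0 j]
        congr 1
        exact Subtype.ext (Prod.ext h1 h2)
      · exfalso
        have h3 := (q0 i).2
        have h4 := (q0 j).2
        rw [h1, h2] at h3
        exact absurd (h3.trans h4) (lt_irrefl _)
    rw [Fintype.card_fin] at hcard hle
    omega
  obtain ⟨i₀, hi₀⟩ := hinr
  set σ : Equiv.Perm (Fin (n + 1)) := Equiv.swap 0 i₀ with hσdef
  set r' : Fin (n + 1) → {p : Fin (n + 1) × Fin (n + 1) // p.1 < p.2} ⊕ Unit := r ∘ σ
    with hr'def
  have hrinj' : Function.Injective r' := hr.comp σ.injective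
  have hr'0 : r' 0 = Sum.inr () := by
    rw [hr'def]
    simp only [Function.comp_apply, hσdef, Equiv.swap_apply_left]
    exact hi₀
  have hr'σ : ∀ i, r' (σ i) = r i := by
    intro i
    rw [hr'def]
    simp only [Function.comp_apply, hσdef, Equiv.swap_apply_self]
  -- sign from permuting the rows
  obtain ⟨sg, hsgu, hsg⟩ : ∃ sg : ℤ, IsUnit sg ∧
      (H.submatrix r id).det = (sg : MvPolynomial (Fin (n + 1) ⊕ Fin (n + 1)) ℤ) *
        (H.submatrix r' id).det := by
    have h0 : H.submatrix r' id = (H.submatrix r id).submatrix ⇑σ id := rfl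
    rcases Int.units_eq_one_or (Equiv.Perm.sign σ) with h | h
    · refine ⟨1, isUnit_one, ?_⟩
      rw [h0, Matrix.det_permute, h]
      push_cast
      ring
    · refine ⟨-1, isUnit_one.neg, ?_⟩
      rw [h0, Matrix.det_permute, h]
      push_cast
      ring
  -- edge data
  have hq : ∀ i : Fin n, ∃ qq, r' i.succ = Sum.inl qq := by
    intro i
    cases hri : r' i.succ with
    | inl qq => exact ⟨qq, rfl⟩
    | inr uu =>
      cases uu
      exact absurd (hrinj' (hri.trans hr'0.symm)) (Fin.succ_ne_zero i)
  choose q hq using hq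
  set a : Fin n → Fin (n + 1) := fun i => (q i).1.1 with hadef
  set b : Fin n → Fin (n + 1) := fun i => (q i).1.2 with hbdef
  have hab : ∀ i, a i < b i := fun i => (q i).2
  have hadjG : ∀ i, G.Adj (a i) (b i) := by
    intro i
    rw [hGdef, SimpleGraph.fromRel_adj]
    refine ⟨ne_of_lt (hab i), Or.inl ⟨σ i.succ, hab i, ?_⟩⟩
    exact hq i
  have hinjE : ∀ i j, s(a i, b i) = s(a j, b j) → i = j := by
    intro i j hij
    rcases Sym2.eq_iff.mp hij with ⟨h1, h2⟩ | ⟨h1, h2⟩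
    · have hqq : q i = q j := Subtype.ext (Prod.ext h1 h2)
      have := hrinj' (by rw [hq i, hq j, hqq] : r' i.succ = r' j.succ)
      exact Fin.succ_injective _ this
    · exfalso
      have h3 := hab i
      have h4 := hab j
      rw [h1, h2] at h3
      exact absurd (h3.trans h4) (lt_irrefl _)
  have hget : ∀ (x y : Fin (n + 1)), (∃ i, ∃ h : x < y, r' i = Sum.inl ⟨(x, y), h⟩) →
      ∃ i, s(a i, b i) = s(x, y) := by
    rintro x y ⟨i, hlt, hri⟩
    have hi0 : i ≠ 0 := by
      intro h0
      rw [h0, hr'0] at hri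
      cases hri
    obtain ⟨i', rfl⟩ := Fin.eq_succ_of_ne_zero hi0
    have hqq : q i' = ⟨(x, y), hlt⟩ := Sum.inl.inj ((hq i').symm.trans hri)
    refine ⟨i', ?_⟩
    rw [hadef, hbdef]
    simp only [hqq]
  have hsurjE : ∀ x y, G.Adj x y → ∃ i, s(a i, b i) = s(x, y) := by
    intro x y hxy
    rw [hGdef, SimpleGraph.fromRel_adj] at hxy
    obtain ⟨hne, hrel⟩ := hxy
    rcases hrel with ⟨i, hlt, hri⟩ | ⟨i, hlt, hri⟩
    · exact hget x y ⟨σ i, hlt, by rw [hr'σ i]; exact hri⟩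
    · obtain ⟨j, hj⟩ := hget y x ⟨σ i, hlt, by rw [hr'σ i]; exact hri⟩
      exact ⟨j, hj.trans Sym2.eq_swap⟩
  -- the unimodular pattern matrix
  set M : Matrix (Fin (n + 1)) (Fin (n + 1)) (MvPolynomial (Fin (n + 1) ⊕ Fin (n + 1)) ℤ) :=
    Matrix.of fun i =>
      Fin.cases (motive := fun _ => Fin (n + 1) → MvPolynomial (Fin (n + 1) ⊕ Fin (n + 1)) ℤ)
        (fun c => B c * T c)
        (fun i' c => if c = b i' then 1 else if c = a i' then -1 else 0) i with hMdef
  have hM0 : ∀ c, M 0 c = B c * T c := by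
    intro c
    rw [hMdef]
    simp only [Matrix.of_apply, Fin.cases_zero]
  have hMe : ∀ (i : Fin n) c, M i.succ c = if c = b i then 1 else if c = a i then -1 else 0 := by
    intro i c
    rw [hMdef]
    simp only [Matrix.of_apply, Fin.cases_succ]
  obtain ⟨ε, hεu, hMdet⟩ := aux_key_det n (fun c => B c * T c) a b G htree hadjG hinjE hsurjE
    M hM0 hMe
  set N := H.submatrix r' id with hNdef
  -- column scaling
  set v : Fin (n + 1) → MvPolynomial (Fin (n + 1) ⊕ Fin (n + 1)) ℤ :=
    Fin.cases 1 (fun i => T (a i) * T (b i)) with hvdef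
  have hNDM : N * Matrix.diagonal T = Matrix.of (fun i j => v i * M i j) := by
    apply Matrix.ext
    intro i j
    rw [Matrix.mul_diagonal]
    induction i using Fin.cases with
    | zero =>
      have hN0 : N 0 j = B j := by
        show H (r' 0) j = B j
        rw [hr'0]
        exact hHinr () j
      show N 0 j * T j = v 0 * M 0 j
      rw [hN0, hM0]
      simp only [hvdef, Fin.cases_zero]
      ring
    | succ i =>
      have hNi : N i.succ j = if j = a i then -(T (b i)) else if j = b i then T (a i) else 0 := by
        show H (r' i.succ) j = _
        rw [hq i]
        exact hHinl (q i) j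
      show N i.succ j * T j = v i.succ * M i.succ j
      rw [hNi, hMe]
      simp only [hvdef, Fin.cases_succ]
      by_cases h1 : j = a i
      · rw [if_pos h1, if_neg (by rw [h1]; exact ne_of_lt (hab i)), if_pos h1, h1]
        ring
      · rw [if_neg h1]
        by_cases h2 : j = b i
        · rw [if_pos h2, if_pos h2, h2]
          ring
        · rw [if_neg h2, if_neg h2, if_neg h1]
          ring
  have hscale : N.det * ∏ l, T l = (∏ i : Fin n, (T (a i) * T (b i))) * M.det := by
    have h1 : (N * Matrix.diagonal T).det = N.det * ∏ l, T l := by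
      rw [Matrix.det_mul, Matrix.det_diagonal]
    have h2 : (N * Matrix.diagonal T).det = (∏ i, v i) * M.det := by
      rw [hNDM, Matrix.det_mul_column]
    have h3 : ∏ i, v i = ∏ i : Fin n, (T (a i) * T (b i)) := by
      rw [Fin.prod_univ_succ]
      simp only [hvdef, Fin.cases_zero, Fin.cases_succ, one_mul]
    rw [← h1, h2, h3]
  -- degree counting
  have hdegcount : ∀ l, (Finset.univ.filter (fun i : Fin n => a i = l ∨ b i = l)).card
      = G.degree l := by
    intro l
    rw [← SimpleGraph.card_neighborFinset_eq_degree]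
    apply Finset.card_bij (fun i _ => if a i = l then b i else a i)
    · intro i hi
      simp only [Finset.mem_filter, Finset.mem_univ, true_and] at hi
      rw [SimpleGraph.mem_neighborFinset]
      rcases hi with h | h
      · rw [if_pos h]
        exact h ▸ hadjG i
      · by_cases h' : a i = l
        · rw [if_pos h']
          exact h' ▸ hadjG i
        · rw [if_neg h']
          exact (h ▸ (hadjG i)).symm
    · intro i hi j hj heq
      simp only [Finset.mem_filter, Finset.mem_univ, true_and] at hi hj
      have him : ∀ k, (a k = l ∨ b k = l) →
          s(a k, b k) = s(l, if a k = l then b k else a k) := by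
        intro k hk
        by_cases h : a k = l
        · rw [if_pos h, h]
        · rw [if_neg h]
          rcases hk with h' | h'
          · exact absurd h' h
          · rw [h', Sym2.eq_swap]
      exact hinjE i j ((him i hi).trans (heq ▸ (him j hj).symm))
    · intro m hm
      rw [SimpleGraph.mem_neighborFinset] at hm
      obtain ⟨k, hk⟩ := hsurjE l m hm
      rcases Sym2.eq_iff.mp hk with ⟨h1, h2⟩ | ⟨h1, h2⟩
      · exact ⟨k, by simp [h1], by rw [if_pos h1]; exact h2⟩
      · refine ⟨k, by simp [h2], ?_⟩
        rw [if_neg (by rw [h1]; exact hm.ne'), ]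
        exact h1
  have hdegpos : ∀ l, 0 < G.degree l :=
    fun l => aux_degree_pos htree.isConnected (by simpa using hs) l
  have hprod_deg : ∏ i : Fin n, (T (a i) * T (b i)) = ∏ l, T l ^ G.degree l := by
    have h1 : ∀ i : Fin n, T (a i) * T (b i)
        = ∏ l, T l ^ ((if a i = l then 1 else 0) + (if b i = l then 1 else 0)) := by
      intro i
      simp_rw [pow_add]
      rw [Finset.prod_mul_distrib]
      simp [pow_ite, Finset.prod_ite_eq]
    rw [Finset.prod_congr rfl (fun i _ => h1 i), Finset.prod_comm]
    refine Finset.prod_congr rfl (fun l _ => ?_)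
    rw [Finset.prod_pow_eq_pow_sum]
    congr 1
    rw [← hdegcount l, Finset.card_filter]
    refine Finset.sum_congr rfl (fun i _ => ?_)
    by_cases h1 : a i = l <;> by_cases h2 : b i = l <;>
      simp [h1, h2]
    exact absurd (h1.trans h2.symm) (ne_of_lt (hab i))
  have hncard : ∀ l, (G.neighborSet l).ncard = G.degree l := by
    intro l
    rw [Set.ncard_eq_toFinset_card']
    rw [Set.toFinset_card]
    rw [← SimpleGraph.card_neighborSet_eq_degree]
  have hTprod_ne : (∏ l, T l) ≠ 0 := by
    rw [Finset.prod_ne_zero_iff]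
    intro l _
    exact MvPolynomial.X_ne_zero _
  have hsplitdeg : ∏ l, T l ^ G.degree l = (∏ l, T l ^ (G.degree l - 1)) * ∏ l, T l := by
    rw [← Finset.prod_mul_distrib]
    refine Finset.prod_congr rfl (fun l _ => ?_)
    rw [← pow_succ]
    congr 1
    have := hdegpos l
    omega
  have hNdet : N.det = (ε : MvPolynomial (Fin (n + 1) ⊕ Fin (n + 1)) ℤ) *
      ((∑ l, B l * T l) * ∏ l, T l ^ (G.degree l - 1)) := by
    apply mul_right_cancel₀ hTprod_ne
    rw [hscale, hMdet, hprod_deg, hsplitdeg]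
    ring
  refine ⟨sg * ε, Int.isUnit_iff.mp (hsgu.mul hεu), ?_⟩
  simp only [hncard]
  have final : (H.submatrix r id).det =
      ((sg * ε : ℤ) : MvPolynomial (Fin (n + 1) ⊕ Fin (n + 1)) ℤ) *
        ((∑ l, B l * T l) * ∏ x, T x ^ (G.degree x - 1)) := by
    rw [hsg, hNdet]
    push_cast
    ring
  exact final

end AuxTreeDet


/- STATEMENT 10:
Same setting as Statement 9.  If G_𝒜 is a tree then
det N_𝒜 = ± (Σ_l B_l T_l) · ∏_l T_l^{deg(l)−1},
where deg(l) is the degree of the vertex l in G_𝒜 (formalized as the cardinality of its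
neighbor set). -/
theorem det_eq_tree_formula_of_isTree
    (s : ℕ) (hs : 2 ≤ s) :
    letI P := MvPolynomial (Fin s ⊕ Fin s) ℤ
    letI T : Fin s → P := fun l => MvPolynomial.X (Sum.inl l)
    letI B : Fin s → P := fun l => MvPolynomial.X (Sum.inr l)
    letI ρ := {p : Fin s × Fin s // p.1 < p.2} ⊕ Unit
    letI H : Matrix ρ (Fin s) P := Matrix.of fun r c =>
      match r with
      | Sum.inl q => if c = q.1.1 then -(T q.1.2) else if c = q.1.2 then T q.1.1 else 0
      | Sum.inr _ => B c
    ∀ r : Fin s → ρ, Function.Injective r →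
      ∀ G : SimpleGraph (Fin s),
        G = (SimpleGraph.fromRel fun l l' : Fin s =>
          ∃ (i : Fin s) (h : l < l'), r i = Sum.inl ⟨(l, l'), h⟩) →
        G.IsTree →
        ∃ ε : ℤ, (ε = 1 ∨ ε = -1) ∧
          (H.submatrix r id).det =
            (ε : P) * ((∑ l, B l * T l) * ∏ l, T l ^ ((G.neighborSet l).ncard - 1)) := by
  intro r hr G hGdef htree
  obtain ⟨n, rfl⟩ : ∃ n, s = n + 1 := ⟨s - 1, by omega⟩
  exact aux_main n hs _ (fun qq c => rfl) (fun u c => rfl) r hr G hGdef htree
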